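/- Let U ⊆ ℝ² be open with coordinates (t, r) and r > 0 on U, let f : (0, ∞) → ℝ be differentiable with f(r) ≠ 0 on U, and let h_tt, h_tr, h_rr, h₁t, h₁r, h₂, ζ_t, ζ_r, ζ_e : U → ℝ be continuously differentiable. Define the gauge-transformed fields h_tt^Y = h_tt + 2 ∂_t ζ_t − f f' ζ_r, h_tr^Y = h_tr + ∂_t ζ_r + ∂_r ζ_t − (f'/f) ζ_t, h_rr^Y = h_rr + 2 ∂_r ζ_r + (f'/f) ζ_r, together with h₁t^Y = h₁t + ζ_t/r + ∂_t ζ_e, h₁r^Y = h₁r + ζ_r/r + ∂_r ζ_e − ζ_e/r, h₂^Y = h₂ + (2/r) ζ_e. With Y_t := r·h₁t − (r²/2) ∂_t h₂ and Y_r := r·h₁r − (r²/2) ∂_r h₂ (assumed continuously differentiable), the combinations F_tt := h_tt − 2 ∂_t Y_t + f f' Y_r, F_tr := h_tr − ∂_t Y_r − ∂_r Y_t + (f'/f) Y_t, F_rr := h_rr − 2 ∂_r Y_r − (f'/f) Y_r are gauge invariant: the same combinations built from the transformed fields equal F_tt, F_tr, F_rr on U. -/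

import Mathlib

private lemma sliceT_aux {U : Set (ℝ × ℝ)} (hU : IsOpen U) {g : ℝ → ℝ → ℝ}
    (hg : ContDiffOn ℝ 1 (fun p : ℝ × ℝ => g p.1 p.2) U) {t r : ℝ} (h : (t, r) ∈ U) :
    DifferentiableAt ℝ (fun s => g s r) t := by
  have hd := (hg.differentiableOn one_ne_zero).differentiableAt (hU.mem_nhds h)
  exact hd.comp t (differentiableAt_id.prodMk (differentiableAt_const r) : DifferentiableAt ℝ (fun s : ℝ => (s, r)) t)

private lemma sliceR_aux {U : Set (ℝ × ℝ)} (hU : IsOpen U) {g : ℝ → ℝ → ℝ}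
    (hg : ContDiffOn ℝ 1 (fun p : ℝ × ℝ => g p.1 p.2) U) {t r : ℝ} (h : (t, r) ∈ U) :
    DifferentiableAt ℝ (fun s => g t s) r := by
  have hd := (hg.differentiableOn one_ne_zero).differentiableAt (hU.mem_nhds h)
  exact hd.comp r ((differentiableAt_const t).prodMk differentiableAt_id)

/-- Partial derivative with respect to the first coordinate `t`. -/
noncomputable def pdt (g : ℝ → ℝ → ℝ) : ℝ → ℝ → ℝ := fun t r => deriv (fun s => g s r) t

/-- Partial derivative with respect to the second coordinate `r`. -/
noncomputable def pdr (g : ℝ → ℝ → ℝ) : ℝ → ℝ → ℝ := fun t r => deriv (fun s => g t s) r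

/-- Gauge invariance of the even-parity tensor components
`F_tt := h_tt − 2∂_t Y_t + f f' Y_r`, `F_tr := h_tr − ∂_t Y_r − ∂_r Y_t + (f'/f) Y_t`,
`F_rr := h_rr − 2∂_r Y_r − (f'/f) Y_r`, where `Y_A := r h₁A − (r²/2) ∂_A h₂`, under the
second-kind gauge transformation of the even-parity metric perturbation components. -/
theorem stmt_9 (U : Set (ℝ × ℝ)) (hU : IsOpen U) (hrpos : ∀ p ∈ U, 0 < p.2)
    (f : ℝ → ℝ) (hfd : DifferentiableOn ℝ f (Set.Ioi 0)) (hfne : ∀ p ∈ U, f p.2 ≠ 0)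
    (htt htr hrr h1t h1r h2 ζt ζr ζe : ℝ → ℝ → ℝ)
    (hhtt : ContDiffOn ℝ 1 (fun p : ℝ × ℝ => htt p.1 p.2) U)
    (hhtr : ContDiffOn ℝ 1 (fun p : ℝ × ℝ => htr p.1 p.2) U)
    (hhrr : ContDiffOn ℝ 1 (fun p : ℝ × ℝ => hrr p.1 p.2) U)
    (hh1t : ContDiffOn ℝ 1 (fun p : ℝ × ℝ => h1t p.1 p.2) U)
    (hh1r : ContDiffOn ℝ 1 (fun p : ℝ × ℝ => h1r p.1 p.2) U)
    (hh2 : ContDiffOn ℝ 1 (fun p : ℝ × ℝ => h2 p.1 p.2) U)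
    (hζt : ContDiffOn ℝ 1 (fun p : ℝ × ℝ => ζt p.1 p.2) U)
    (hζr : ContDiffOn ℝ 1 (fun p : ℝ × ℝ => ζr p.1 p.2) U)
    (hζe : ContDiffOn ℝ 1 (fun p : ℝ × ℝ => ζe p.1 p.2) U)
    (httY htrY hrrY h1tY h1rY h2Y : ℝ → ℝ → ℝ)
    (hhttY : ∀ t r, httY t r = htt t r + 2 * pdt ζt t r - f r * deriv f r * ζr t r)
    (hhtrY : ∀ t r, htrY t r
        = htr t r + pdt ζr t r + pdr ζt t r - deriv f r / f r * ζt t r)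
    (hhrrY : ∀ t r, hrrY t r = hrr t r + 2 * pdr ζr t r + deriv f r / f r * ζr t r)
    (hh1tY : ∀ t r, h1tY t r = h1t t r + ζt t r / r + pdt ζe t r)
    (hh1rY : ∀ t r, h1rY t r = h1r t r + ζr t r / r + pdr ζe t r - ζe t r / r)
    (hh2Y : ∀ t r, h2Y t r = h2 t r + 2 / r * ζe t r)
    (Yt Yr YtY YrY : ℝ → ℝ → ℝ)
    (hYt : ∀ t r, Yt t r = r * h1t t r - r ^ 2 / 2 * pdt h2 t r)
    (hYr : ∀ t r, Yr t r = r * h1r t r - r ^ 2 / 2 * pdr h2 t r)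
    (hYtC : ContDiffOn ℝ 1 (fun p : ℝ × ℝ => Yt p.1 p.2) U)
    (hYrC : ContDiffOn ℝ 1 (fun p : ℝ × ℝ => Yr p.1 p.2) U)
    (hYtY : ∀ t r, YtY t r = r * h1tY t r - r ^ 2 / 2 * pdt h2Y t r)
    (hYrY : ∀ t r, YrY t r = r * h1rY t r - r ^ 2 / 2 * pdr h2Y t r) :
    ∀ t r, (t, r) ∈ U →
      (httY t r - 2 * pdt YtY t r + f r * deriv f r * YrY t r
          = htt t r - 2 * pdt Yt t r + f r * deriv f r * Yr t r) ∧
      (htrY t r - pdt YrY t r - pdr YtY t r + deriv f r / f r * YtY t r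
          = htr t r - pdt Yr t r - pdr Yt t r + deriv f r / f r * Yt t r) ∧
      (hrrY t r - 2 * pdr YrY t r - deriv f r / f r * YrY t r
          = hrr t r - 2 * pdr Yr t r - deriv f r / f r * Yr t r) := by
  intro t r hmem
  have hr : r ≠ 0 := (hrpos _ hmem).ne'
  -- Step 1: pointwise formulas YtY = Yt + ζt and YrY = Yr + ζr on U
  have hYtYeq : ∀ t' r', (t', r') ∈ U → YtY t' r' = Yt t' r' + ζt t' r' := by
    intro t' r' h'
    have hr' : r' ≠ 0 := (hrpos _ h').ne'
    have d2 : DifferentiableAt ℝ (fun s => h2 s r') t' := sliceT_aux hU hh2 h'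
    have de : DifferentiableAt ℝ (fun s => ζe s r') t' := sliceT_aux hU hζe h'
    have hp : pdt h2Y t' r' = pdt h2 t' r' + 2 / r' * pdt ζe t' r' := by
      unfold pdt
      have hfun : (fun s => h2Y s r') = fun s => h2 s r' + 2 / r' * ζe s r' :=
        funext fun s => hh2Y s r'
      rw [hfun, deriv_fun_add d2 (de.const_mul _), deriv_const_mul _ de]
    rw [hYtY, hh1tY, hp, hYt]
    field_simp
    ring
  have hYrYeq : ∀ t' r', (t', r') ∈ U → YrY t' r' = Yr t' r' + ζr t' r' := by
    intro t' r' h'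
    have hr' : r' ≠ 0 := (hrpos _ h').ne'
    have d2 : DifferentiableAt ℝ (fun s => h2 t' s) r' := sliceR_aux hU hh2 h'
    have de : DifferentiableAt ℝ (fun s => ζe t' s) r' := sliceR_aux hU hζe h'
    have dq : DifferentiableAt ℝ (fun s : ℝ => 2 / s) r' :=
      (differentiableAt_const 2).div differentiableAt_id hr'
    have hdq : deriv (fun s : ℝ => 2 / s) r' = -2 / r' ^ 2 := by
      simp_rw [div_eq_mul_inv]
      rw [deriv_const_mul _ (differentiableAt_inv hr'), deriv_inv]
      field_simp
    have hp : pdr h2Y t' r'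
        = pdr h2 t' r' + (-2 / r' ^ 2 * ζe t' r' + 2 / r' * pdr ζe t' r') := by
      unfold pdr
      have hfun : (fun s => h2Y t' s) = fun s => h2 t' s + 2 / s * ζe t' s :=
        funext fun s => hh2Y t' s
      rw [hfun, deriv_fun_add d2 (dq.fun_mul de), deriv_fun_mul dq de, hdq]
    rw [hYrY, hh1rY, hp, hYr]
    field_simp
    ring
  -- Step 2: derivative identities at (t, r)
  have hcT : Continuous fun s : ℝ => (s, r) := continuous_id.prodMk continuous_const
  have hcR : Continuous fun s : ℝ => (t, s) := continuous_const.prodMk continuous_id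
  have hnt : ∀ᶠ s in nhds t, (s, r) ∈ U :=
    (hU.preimage hcT).eventually_mem (show t ∈ (fun s : ℝ => (s, r)) ⁻¹' U from hmem)
  have hnr : ∀ᶠ s in nhds r, (t, s) ∈ U :=
    (hU.preimage hcR).eventually_mem (show r ∈ (fun s : ℝ => (t, s)) ⁻¹' U from hmem)
  have e1 : pdt YtY t r = pdt Yt t r + pdt ζt t r := by
    unfold pdt
    have hev : (fun s => YtY s r) =ᶠ[nhds t] fun s => Yt s r + ζt s r :=
      hnt.mono fun s hs => hYtYeq s r hs
    rw [hev.deriv_eq, deriv_fun_add (sliceT_aux hU hYtC hmem) (sliceT_aux hU hζt hmem)]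
  have e2 : pdt YrY t r = pdt Yr t r + pdt ζr t r := by
    unfold pdt
    have hev : (fun s => YrY s r) =ᶠ[nhds t] fun s => Yr s r + ζr s r :=
      hnt.mono fun s hs => hYrYeq s r hs
    rw [hev.deriv_eq, deriv_fun_add (sliceT_aux hU hYrC hmem) (sliceT_aux hU hζr hmem)]
  have e3 : pdr YtY t r = pdr Yt t r + pdr ζt t r := by
    unfold pdr
    have hev : (fun s => YtY t s) =ᶠ[nhds r] fun s => Yt t s + ζt t s :=
      hnr.mono fun s hs => hYtYeq t s hs
    rw [hev.deriv_eq, deriv_fun_add (sliceR_aux hU hYtC hmem) (sliceR_aux hU hζt hmem)]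
  have e4 : pdr YrY t r = pdr Yr t r + pdr ζr t r := by
    unfold pdr
    have hev : (fun s => YrY t s) =ᶠ[nhds r] fun s => Yr t s + ζr t s :=
      hnr.mono fun s hs => hYrYeq t s hs
    rw [hev.deriv_eq, deriv_fun_add (sliceR_aux hU hYrC hmem) (sliceR_aux hU hζr hmem)]
  refine ⟨?_, ?_, ?_⟩
  · rw [hhttY, e1, hYrYeq t r hmem]; ring
  · rw [hhtrY, e2, e3, hYtYeq t r hmem]; ring
  · rw [hhrrY, e4, hYrYeq t r hmem]; ring
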